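/- Let Ω ⊆ ℝ^N be open and let T: Ω → ℝ be continuous and such that epi(T) has locally positive reach. Let x̄ ∈ Ω. Then T is non-Lipschitz at x̄ if and only if there exists a nonzero vector ζ ∈ ℝ^N such that (ζ, 0) belongs to the proximal normal cone to epi(T) at (x̄, T(x̄)). -/

import Mathlib

open scoped RealInnerProductSpace ENNReal NNReal
open MeasureTheory Filter

noncomputable section

/-- The proximal normal cone to `K` at `x`: vectors `v` such that for some `σ ≥ 0`,
`⟪v, y - x⟫ ≤ σ ‖y - x‖²` for all `y ∈ K`. -/
def proxNormalCone {H : Type*} [NormedAddCommGroup H] [InnerProductSpace ℝ H]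
    (K : Set H) (x : H) : Set H :=
  {v | ∃ σ : ℝ, 0 ≤ σ ∧ ∀ y ∈ K, ⟪v, y - x⟫ ≤ σ * ‖y - x‖ ^ 2}

/-- `K` has locally positive reach: there is a continuous `φ : K → [0,∞)` with
`⟪v, y - x⟫ ≤ φ x ‖v‖ ‖y - x‖²` for all `x, y ∈ K` and `v ∈ N_K(x)`. -/
def HasLocPosReach {H : Type*} [NormedAddCommGroup H] [InnerProductSpace ℝ H]
    (K : Set H) : Prop :=
  ∃ φ : H → ℝ, ContinuousOn φ K ∧ (∀ x ∈ K, 0 ≤ φ x) ∧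
    ∀ x ∈ K, ∀ v ∈ proxNormalCone K x, ∀ y ∈ K, ⟪v, y - x⟫ ≤ φ x * ‖v‖ * ‖y - x‖ ^ 2

/-- `ℝ^N` with the Euclidean inner product. -/
abbrev Euc (N : ℕ) := EuclideanSpace ℝ (Fin N)

/-- The pair `(x, β)` as an element of `E × ℝ` equipped with the L² (inner product) norm. -/
def pairLp {E : Type*} [NormedAddCommGroup E] [InnerProductSpace ℝ E] (x : E) (β : ℝ) :
    WithLp 2 (E × ℝ) := (WithLp.equiv 2 (E × ℝ)).symm (x, β)

/-- The epigraph of `f` restricted to the domain `D`: `{(x, β) : x ∈ D, β ≥ f x}`. -/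
def epigraphOn {E : Type*} [NormedAddCommGroup E] [InnerProductSpace ℝ E]
    (f : E → ℝ) (D : Set E) : Set (WithLp 2 (E × ℝ)) :=
  {p | (WithLp.equiv 2 (E × ℝ) p).1 ∈ D ∧
    f ((WithLp.equiv 2 (E × ℝ) p).1) ≤ (WithLp.equiv 2 (E × ℝ) p).2}

/-- `f` is non-Lipschitz at `x`: there are sequences `xs i ≠ ys i` converging to `x` with
`limsup |f (ys i) - f (xs i)| / ‖ys i - xs i‖ = +∞`. -/
def NonLipschitzAt {X : Type*} [NormedAddCommGroup X] (f : X → ℝ) (x : X) : Prop :=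
  ∃ xs ys : ℕ → X, (∀ i, xs i ≠ ys i) ∧ Tendsto xs atTop (nhds x) ∧ Tendsto ys atTop (nhds x) ∧
    limsup (fun i => ((|f (ys i) - f (xs i)| / ‖ys i - xs i‖ : ℝ) : EReal)) atTop = ⊤

section AuxLemmas

variable {H : Type*} [NormedAddCommGroup H] [InnerProductSpace ℝ H]

/-- A locally-verified proximal inequality upgrades to a global one. -/
lemma aux_prox_of_local {K : Set H} {q v : H} {σ δ : ℝ} (hσ : 0 ≤ σ) (hδ : 0 < δ)
    (h : ∀ w ∈ K, ‖w - q‖ ≤ δ → ⟪v, w - q⟫ ≤ σ * ‖w - q‖ ^ 2) :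
    v ∈ proxNormalCone K q := by
  refine ⟨max σ (‖v‖ / δ), le_trans hσ (le_max_left _ _), fun w hw => ?_⟩
  rcases le_or_gt ‖w - q‖ δ with hle | hgt
  · exact (h w hw hle).trans (by nlinarith [sq_nonneg ‖w - q‖, le_max_left σ (‖v‖ / δ)])
  · have h1 : ⟪v, w - q⟫ ≤ ‖v‖ * ‖w - q‖ := real_inner_le_norm _ _
    have h2 : ‖v‖ / δ ≤ max σ (‖v‖ / δ) := le_max_right _ _
    have hv0 : 0 ≤ ‖v‖ := norm_nonneg _
    have hd : 0 < ‖w - q‖ := lt_trans hδ hgt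
    calc ⟪v, w - q⟫ ≤ ‖v‖ * ‖w - q‖ := h1
      _ ≤ (‖v‖ / δ) * ‖w - q‖ ^ 2 := by
          rw [div_mul_eq_mul_div, le_div_iff₀ hδ]
          nlinarith [mul_le_mul_of_nonneg_left hgt.le (mul_nonneg hv0 hd.le)]
      _ ≤ max σ (‖v‖ / δ) * ‖w - q‖ ^ 2 := by nlinarith [sq_nonneg ‖w - q‖]

/-- A nearest point in a locally representative subset yields a proximal normal. -/
lemma aux_prox_of_min {K S : Set H} {z q : H} (hq : q ∈ S)
    (hmin : ∀ w ∈ S, ‖z - q‖ ≤ ‖z - w‖) {δ : ℝ} (hδ : 0 < δ)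
    (hloc : ∀ w ∈ K, ‖w - q‖ ≤ δ → w ∈ S) :
    z - q ∈ proxNormalCone K q := by
  refine aux_prox_of_local (σ := 1/2) (by norm_num) hδ (fun w hw hwδ => ?_)
  have hwS : w ∈ S := hloc w hw hwδ
  have h1 : ‖z - q‖ ≤ ‖z - w‖ := hmin w hwS
  have h2 : ‖z - w‖ ^ 2 = ‖(z - q) - (w - q)‖ ^ 2 := by rw [sub_sub_sub_cancel_right]
  have h3 : ‖(z - q) - (w - q)‖ ^ 2
      = ‖z - q‖ ^ 2 - 2 * ⟪z - q, w - q⟫ + ‖w - q‖ ^ 2 := by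
    rw [norm_sub_sq_real]
  nlinarith [norm_nonneg (z - q), norm_nonneg (z - w)]

lemma aux_prox_smul {K : Set H} {q v : H} {c : ℝ} (hc : 0 ≤ c)
    (hv : v ∈ proxNormalCone K q) : c • v ∈ proxNormalCone K q := by
  obtain ⟨σ, hσ, h⟩ := hv
  refine ⟨c * σ, mul_nonneg hc hσ, fun y hy => ?_⟩
  rw [real_inner_smul_left]
  calc c * ⟪v, y - q⟫ ≤ c * (σ * ‖y - q‖ ^ 2) := mul_le_mul_of_nonneg_left (h y hy) hc
    _ = c * σ * ‖y - q‖ ^ 2 := by ring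

/-- Limits of proximal normals at converging base points are proximal normals,
for sets of locally positive reach. -/
lemma aux_prox_limit {K : Set H} {φ : H → ℝ} (hφc : ContinuousOn φ K)
    (hφ0 : ∀ x ∈ K, 0 ≤ φ x)
    (hN : ∀ x ∈ K, ∀ v ∈ proxNormalCone K x, ∀ y ∈ K, ⟪v, y - x⟫ ≤ φ x * ‖v‖ * ‖y - x‖ ^ 2)
    {q v : ℕ → H} {qL vL : H} (hqK : ∀ i, q i ∈ K) (hqL : qL ∈ K)
    (hv : ∀ i, v i ∈ proxNormalCone K (q i))
    (hq : Tendsto q atTop (nhds qL)) (hvt : Tendsto v atTop (nhds vL)) :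
    vL ∈ proxNormalCone K qL := by
  refine ⟨φ qL * ‖vL‖, mul_nonneg (hφ0 qL hqL) (norm_nonneg _), fun w hw => ?_⟩
  have hφq : Tendsto (fun i => φ (q i)) atTop (nhds (φ qL)) := by
    have h' : Tendsto q atTop (nhdsWithin qL K) :=
      tendsto_nhdsWithin_iff.mpr ⟨hq, Filter.Eventually.of_forall hqK⟩
    exact (hφc qL hqL).tendsto.comp h'
  have hA : Tendsto (fun i => ⟪v i, w - q i⟫) atTop (nhds ⟪vL, w - qL⟫) :=
    hvt.inner (tendsto_const_nhds.sub hq)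
  have hB : Tendsto (fun i => φ (q i) * ‖v i‖ * ‖w - q i‖ ^ 2) atTop
      (nhds (φ qL * ‖vL‖ * ‖w - qL‖ ^ 2)) :=
    (hφq.mul hvt.norm).mul (((tendsto_const_nhds.sub hq).norm).pow 2)
  exact le_of_tendsto_of_tendsto' hA hB (fun i => hN (q i) (hqK i) (v i) (hv i) w hw)

end AuxLemmas

section PairLemmas

variable {F : Type*} [NormedAddCommGroup F] [InnerProductSpace ℝ F]

lemma aux_pair_inner (p q : WithLp 2 (F × ℝ)) : ⟪p, q⟫ = ⟪p.fst, q.fst⟫ + p.snd * q.snd := by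
  rw [WithLp.prod_inner_apply]; norm_num [RCLike.inner_apply]; ring

lemma aux_pair_norm_sq (p : WithLp 2 (F × ℝ)) : ‖p‖ ^ 2 = ‖p.fst‖ ^ 2 + p.snd ^ 2 := by
  rw [WithLp.prod_norm_sq_eq_of_L2]; norm_num [Real.norm_eq_abs, sq_abs]

lemma aux_pair_fst_le (p : WithLp 2 (F × ℝ)) : ‖p.fst‖ ≤ ‖p‖ := by
  nlinarith [aux_pair_norm_sq p, norm_nonneg p, norm_nonneg p.fst, sq_nonneg p.snd]

lemma aux_pair_snd_le (p : WithLp 2 (F × ℝ)) : |p.snd| ≤ ‖p‖ := by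
  nlinarith [aux_pair_norm_sq p, norm_nonneg p, norm_nonneg p.fst, abs_nonneg p.snd, sq_abs p.snd,
    sq_nonneg ‖p.fst‖]

lemma aux_le_of_sq_le_sq {a b : ℝ} (ha : 0 ≤ a) (hb : 0 ≤ b) (h : a ^ 2 ≤ b ^ 2) : a ≤ b := by
  rw [← Real.sqrt_sq ha, ← Real.sqrt_sq hb]; exact Real.sqrt_le_sqrt h

lemma aux_pair_norm_eq {p : WithLp 2 (F × ℝ)} {b : ℝ} (hb : 0 ≤ b)
    (h : ‖p‖ ^ 2 = b ^ 2) : ‖p‖ = b := by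
  rw [← Real.sqrt_sq (norm_nonneg p), h, Real.sqrt_sq hb]

lemma aux_pair_tendsto_fst {f : ℕ → WithLp 2 (F × ℝ)} {a : WithLp 2 (F × ℝ)}
    (h : Tendsto f atTop (nhds a)) : Tendsto (fun i => (f i).fst) atTop (nhds a.fst) := by
  rw [tendsto_iff_norm_sub_tendsto_zero] at h ⊢
  exact squeeze_zero (fun i => norm_nonneg _) (fun i => aux_pair_fst_le (f i - a)) h

lemma aux_pair_tendsto_snd {f : ℕ → WithLp 2 (F × ℝ)} {a : WithLp 2 (F × ℝ)}
    (h : Tendsto f atTop (nhds a)) : Tendsto (fun i => (f i).snd) atTop (nhds a.snd) := by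
  rw [tendsto_iff_norm_sub_tendsto_zero] at h ⊢
  refine squeeze_zero (fun i => norm_nonneg _) (fun i => ?_) h
  simpa [Real.norm_eq_abs] using aux_pair_snd_le (f i - a)

lemma aux_mem_epigraphOn {f : F → ℝ} {D : Set F} {p : WithLp 2 (F × ℝ)} :
    p ∈ epigraphOn f D ↔ p.fst ∈ D ∧ f p.fst ≤ p.snd := Iff.rfl

lemma aux_prox_snd_nonpos {f : F → ℝ} {D : Set F} {q : WithLp 2 (F × ℝ)}
    (hq : q ∈ epigraphOn f D) {v : WithLp 2 (F × ℝ)}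
    (hv : v ∈ proxNormalCone (epigraphOn f D) q) : v.snd ≤ 0 := by
  obtain ⟨σ, hσ, h⟩ := hv
  by_contra hpos
  push_neg at hpos
  set τ := v.snd / (2 * (σ + 1)) with hτdef
  have hτ : 0 < τ := by positivity
  set y : WithLp 2 (F × ℝ) := (WithLp.equiv 2 (F × ℝ)).symm (q.fst, q.snd + τ) with hy
  have hyK : y ∈ epigraphOn f D := ⟨hq.1, le_trans hq.2 (le_add_of_nonneg_right hτ.le)⟩
  have h1 : (y - q).fst = 0 := by simp [hy]
  have h2 : (y - q).snd = τ := by simp [hy]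
  have hin : ⟪v, y - q⟫ = v.snd * τ := by rw [aux_pair_inner, h1, h2]; simp
  have hns : ‖y - q‖ ^ 2 = τ ^ 2 := by rw [aux_pair_norm_sq, h1, h2]; simp
  have hkey := h y hyK
  rw [hin, hns] at hkey
  have heq : τ * (2 * (σ + 1)) = v.snd := by rw [hτdef]; field_simp
  nlinarith [mul_pos hτ hτ]

lemma aux_pairLp_fst (x : F) (b : ℝ) : (pairLp x b).fst = x := rfl
lemma aux_pairLp_snd (x : F) (b : ℝ) : (pairLp x b).snd = b := rfl
lemma aux_pairLp_sub (x y : F) (b c : ℝ) : pairLp x b - pairLp y c = pairLp (x - y) (b - c) := rfl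

end PairLemmas


set_option maxHeartbeats 4000000 in
set_option synthInstance.maxHeartbeats 1000000 in
/-- Proposition 3.2. Let `Ω ⊆ ℝ^N` be open and `T : Ω → ℝ` continuous with
`epi(T)` of locally positive reach. Then `T` is non-Lipschitz at `x̄ ∈ Ω` iff there is a nonzero
`ζ` with `(ζ, 0)` in the proximal normal cone to `epi(T)` at `(x̄, T x̄)`. -/

theorem nonLipschitz_iff_horizontal_proximal_normal
    {N : ℕ} (Ω : Set (Euc N)) (hΩ : IsOpen Ω)
    (T : Euc N → ℝ) (hTcont : ContinuousOn T Ω)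
    (hepi : HasLocPosReach (epigraphOn T Ω))
    (xbar : Euc N) (hx : xbar ∈ Ω) :
    NonLipschitzAt T xbar ↔
      ∃ ζ : Euc N, ζ ≠ 0 ∧
        pairLp ζ 0 ∈ proxNormalCone (epigraphOn T Ω) (pairLp xbar (T xbar)) := by
  classical
  obtain ⟨φ, hφc, hφ0, hφN⟩ := hepi
  have hPK : pairLp xbar (T xbar) ∈ epigraphOn T Ω := ⟨hx, le_refl _⟩
  constructor
  · -- hard direction: non-Lipschitz implies a horizontal proximal normal
    intro hNL
    by_contra hno
    -- Claim A: uniform slope bound on proximal normals near the base point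
    have claimA : ∃ ε > (0:ℝ), ∃ s > (0:ℝ), ∀ q ∈ epigraphOn T Ω,
        ‖q - pairLp xbar (T xbar)‖ ≤ ε →
        ∀ v ∈ proxNormalCone (epigraphOn T Ω) q, s * ‖v‖ ≤ -v.snd := by
      by_contra hA
      push_neg at hA
      have sel : ∀ i : ℕ, ∃ q, q ∈ epigraphOn T Ω ∧ ‖q - pairLp xbar (T xbar)‖ ≤ 1/(i+1) ∧
          ∃ v, v ∈ proxNormalCone (epigraphOn T Ω) q ∧ -v.snd < (1/(i+1)) * ‖v‖ := by
        intro i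
        obtain ⟨q, hq1, hq2, v, hv1, hv2⟩ :=
          hA (1/(i+1)) (by positivity) (1/(i+1)) (by positivity)
        exact ⟨q, hq1, hq2, v, hv1, hv2⟩
      choose q hqK hqP v hvN hvs using sel
      have hvne : ∀ i, v i ≠ 0 := by
        intro i h0
        have := hvs i
        rw [h0] at this
        simp at this
      set u : ℕ → WithLp 2 (Euc N × ℝ) := fun i => ‖v i‖⁻¹ • v i with hu
      have hvpos : ∀ i, 0 < ‖v i‖ := fun i => norm_pos_iff.mpr (hvne i)
      have huN : ∀ i, u i ∈ proxNormalCone (epigraphOn T Ω) (q i) :=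
        fun i => aux_prox_smul (inv_nonneg.mpr (hvpos i).le) (hvN i)
      have hun : ∀ i, ‖u i‖ = 1 := by
        intro i
        rw [hu]
        simp only [norm_smul, norm_inv, norm_norm]
        exact inv_mul_cancel₀ (hvpos i).ne'
      have husnd : ∀ i, (u i).snd = ‖v i‖⁻¹ * (v i).snd := fun i => rfl
      have hus1 : ∀ i, -(u i).snd ≤ 1/(i+1) := by
        intro i
        have h1 := mul_le_mul_of_nonneg_left (hvs i).le (inv_nonneg.mpr (hvpos i).le)
        rw [husnd i]
        have h2 : ‖v i‖⁻¹ * ((1/(i+1)) * ‖v i‖) = 1/(i+1) := by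
          rw [mul_comm ((1:ℝ)/(i+1)), ← mul_assoc, inv_mul_cancel₀ (hvpos i).ne', one_mul]
        calc -(‖v i‖⁻¹ * (v i).snd) = ‖v i‖⁻¹ * (-(v i).snd) := by ring
          _ ≤ ‖v i‖⁻¹ * ((1/(i+1)) * ‖v i‖) := h1
          _ = 1/(i+1) := h2
      have hus0 : ∀ i, (u i).snd ≤ 0 := fun i => aux_prox_snd_nonpos (hqK i) (huN i)
      have hmem : ∀ i, u i ∈ Metric.sphere (0 : WithLp 2 (Euc N × ℝ)) 1 := by
        intro i; rw [mem_sphere_zero_iff_norm]; exact hun i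
      obtain ⟨a, ha, ψ, hψm, hψt⟩ := (isCompact_sphere (0 : WithLp 2 (Euc N × ℝ)) 1).tendsto_subseq hmem
      have hqψ : Tendsto (fun i => q (ψ i)) atTop (nhds (pairLp xbar (T xbar))) := by
        rw [tendsto_iff_norm_sub_tendsto_zero]
        refine squeeze_zero (fun i => norm_nonneg _) (fun i => ?_)
          tendsto_one_div_add_atTop_nhds_zero_nat
        refine le_trans (hqP (ψ i)) ?_
        apply one_div_le_one_div_of_le (by positivity)
        have hle : i ≤ ψ i := hψm.le_apply
        have : (i:ℝ) ≤ (ψ i : ℝ) := by exact_mod_cast hle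
        linarith
      have haN : a ∈ proxNormalCone (epigraphOn T Ω) (pairLp xbar (T xbar)) :=
        aux_prox_limit hφc hφ0 hφN (fun i => hqK (ψ i)) hPK (fun i => huN (ψ i)) hqψ hψt
      have h2t : Tendsto (fun i => (u (ψ i)).snd) atTop (nhds a.snd) := aux_pair_tendsto_snd hψt
      have ha2le : a.snd ≤ 0 := le_of_tendsto h2t (Eventually.of_forall (fun i => hus0 (ψ i)))
      have ha2ge : -a.snd ≤ 0 := by
        refine le_of_tendsto_of_tendsto' h2t.neg tendsto_one_div_add_atTop_nhds_zero_nat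
          (fun i => ?_)
        refine le_trans (hus1 (ψ i)) ?_
        apply one_div_le_one_div_of_le (by positivity)
        have hle : i ≤ ψ i := hψm.le_apply
        have : (i:ℝ) ≤ (ψ i : ℝ) := by exact_mod_cast hle
        linarith
      have ha2 : a.snd = 0 := le_antisymm ha2le (by linarith)
      have hanorm : ‖a‖ = 1 := mem_sphere_zero_iff_norm.mp ha
      have ha1 : a.fst ≠ 0 := by
        intro h0
        have := aux_pair_norm_sq a
        rw [h0, ha2, hanorm] at this
        simp at this
      have hpair : pairLp a.fst 0 = a := WithLp.ofLp_injective _ (Prod.ext rfl ha2.symm)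
      exact hno ⟨a.fst, ha1, by rwa [hpair]⟩
    obtain ⟨ε, hε, s, hs, hslope⟩ := claimA
    -- constants
    set Φ : ℝ := φ (pairLp xbar (T xbar)) + 1 with hΦdef
    have hΦ1 : 1 ≤ Φ := by
      have := hφ0 _ hPK
      rw [hΦdef]; linarith
    have hΦ0 : 0 < Φ := by linarith
    -- bound for φ near the base point
    have hφP := Metric.continuousWithinAt_iff.mp (hφc _ hPK) 1 one_pos
    obtain ⟨ε₂', hε₂', hφb⟩ := hφP
    -- radius inside Ω
    obtain ⟨δ₀, hδ₀, hδ₀sub⟩ := Metric.isOpen_iff.mp hΩ xbar hx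
    set r₁ : ℝ := δ₀ / 3 with hr₁def
    have hr₁ : 0 < r₁ := by positivity
    have hr₁sub : Metric.closedBall xbar (2 * r₁) ⊆ Ω := by
      refine subset_trans ?_ hδ₀sub
      intro y hy
      rw [Metric.mem_closedBall] at hy
      rw [Metric.mem_ball]
      rw [hr₁def] at hy
      linarith
    set R : ℝ := min ε (min (ε₂'/2) r₁) with hRdef
    have hR : 0 < R := lt_min hε (lt_min (by positivity) hr₁)
    have hRε : R ≤ ε := min_le_left _ _
    have hRε₂ : R ≤ ε₂'/2 := le_trans (min_le_right _ _) (min_le_left _ _)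
    have hRr₁ : R ≤ r₁ := le_trans (min_le_right _ _) (min_le_right _ _)
    set m : ℝ := min (R/8) (s/(8*Φ)) with hmdef
    have hm : 0 < m := lt_min (by positivity) (by positivity)
    have hmR : m ≤ R/8 := min_le_left _ _
    have hms : m ≤ s/(8*Φ) := min_le_right _ _
    -- continuity of T at xbar
    have hTc : ContinuousAt T xbar := hTcont.continuousAt (hΩ.mem_nhds hx)
    obtain ⟨δT, hδT, hTb⟩ := Metric.continuousAt_iff.mp hTc m hm
    set r₂ : ℝ := min (δT/2) m with hr₂def
    have hr₂ : 0 < r₂ := lt_min (by positivity) hm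
    have hr₂δT : r₂ ≤ δT/2 := min_le_left _ _
    have hr₂m : r₂ ≤ m := min_le_right _ _
    have hTball : ∀ x' ∈ Metric.ball xbar r₂, |T x' - T xbar| ≤ m := by
      intro x' hx'
      rw [Metric.mem_ball] at hx'
      have : dist x' xbar < δT := by linarith
      have := hTb this
      rw [Real.dist_eq] at this
      exact this.le
    have hballΩ : Metric.ball xbar r₂ ⊆ Ω := by
      refine subset_trans ?_ hr₁sub
      intro y hy
      rw [Metric.mem_ball] at hy
      rw [Metric.mem_closedBall]
      have : r₂ ≤ r₁ := le_trans hr₂m (le_trans hmR (by linarith))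
      linarith
    have hQK : ∀ x' ∈ Metric.ball xbar r₂, pairLp x' (T x') ∈ epigraphOn T Ω :=
      fun x' hx' => ⟨hballΩ hx', le_refl _⟩
    have hQP : ∀ x' ∈ Metric.ball xbar r₂,
        ‖pairLp x' (T x') - pairLp xbar (T xbar)‖ ≤ R/4 := by
      intro x' hx'
      have h1 : ‖x' - xbar‖ ≤ R/8 := by
        have := Metric.mem_ball.mp hx'
        rw [dist_eq_norm] at this
        linarith [le_trans hr₂m hmR]
      have h2 : |T x' - T xbar| ≤ R/8 := le_trans (hTball x' hx') hmR
      refine aux_le_of_sq_le_sq (norm_nonneg _) (by positivity) ?_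
      rw [aux_pairLp_sub, aux_pair_norm_sq, aux_pairLp_fst, aux_pairLp_snd]
      nlinarith [sq_abs (T x' - T xbar), norm_nonneg (x' - xbar), abs_nonneg (T x' - T xbar)]
    -- the compact local piece of the epigraph
    set S : Set (WithLp 2 (Euc N × ℝ)) :=
      {w | w.fst ∈ Metric.closedBall xbar (2*r₁) ∧ T w.fst ≤ w.snd ∧
        ‖w - pairLp xbar (T xbar)‖ ≤ R} with hSdef
    have hSK : S ⊆ epigraphOn T Ω := fun w hw => ⟨hr₁sub hw.1, hw.2.1⟩
    have hSclosed : IsClosed S := by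
      apply IsSeqClosed.isClosed
      intro w wL hw hwt
      have h1 : Tendsto (fun j => (w j).fst) atTop (nhds wL.fst) := aux_pair_tendsto_fst hwt
      have h2 : Tendsto (fun j => (w j).snd) atTop (nhds wL.snd) := aux_pair_tendsto_snd hwt
      have hball : wL.fst ∈ Metric.closedBall xbar (2*r₁) :=
        Metric.isClosed_closedBall.mem_of_tendsto h1 (Eventually.of_forall (fun j => (hw j).1))
      have hΩL : wL.fst ∈ Ω := hr₁sub hball
      have h3 : Tendsto (fun j => T (w j).fst) atTop (nhds (T wL.fst)) :=
        (hTcont.continuousAt (hΩ.mem_nhds hΩL)).tendsto.comp h1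
      refine ⟨hball, le_of_tendsto_of_tendsto' h3 h2 (fun j => (hw j).2.1), ?_⟩
      exact le_of_tendsto ((hwt.sub tendsto_const_nhds).norm)
        (Eventually.of_forall (fun j => (hw j).2.2))
    have hSbdd : Bornology.IsBounded S := by
      refine (Metric.isBounded_closedBall (x := pairLp xbar (T xbar)) (r := R)).subset ?_
      intro w hw
      rw [Metric.mem_closedBall, dist_eq_norm]
      exact hw.2.2
    have hScompact : IsCompact S := Metric.isCompact_of_isClosed_isBounded hSclosed hSbdd
    -- Claim B: unit proximal normals with definite downward slope at graph points
    have claimB : ∀ x' ∈ Metric.ball xbar r₂, ∃ u,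
        u ∈ proxNormalCone (epigraphOn T Ω) (pairLp x' (T x')) ∧ ‖u‖ = 1 ∧ u.snd ≤ -s := by
      intro x' hx'
      set Q : WithLp 2 (Euc N × ℝ) := pairLp x' (T x') with hQdef
      have hQS : Q ∈ S := by
        refine ⟨?_, le_refl _, le_trans (hQP x' hx') (by linarith)⟩
        show x' ∈ Metric.closedBall xbar (2 * r₁)
        rw [Metric.mem_closedBall]
        have hd := Metric.mem_ball.mp hx'
        have hr₂r₁ : r₂ ≤ r₁ := le_trans hr₂m (le_trans hmR (by linarith))
        linarith
      set tB : ℕ → ℝ := fun i => (R/8)/(i+1) with htBdef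
      have htB : ∀ i, 0 < tB i := fun i => by positivity
      have htB8 : ∀ i, tB i ≤ R/8 := by
        intro i
        rw [htBdef]
        rw [div_le_iff₀ (by positivity)]
        nlinarith [Nat.cast_nonneg i (α := ℝ), hR]
      set z : ℕ → WithLp 2 (Euc N × ℝ) := fun i => pairLp x' (T x' - tB i) with hzdef
      have hzQ : ∀ i, ‖z i - Q‖ = tB i := by
        intro i
        refine aux_pair_norm_eq (htB i).le ?_
        rw [hzdef, hQdef, aux_pairLp_sub, aux_pair_norm_sq, aux_pairLp_fst, aux_pairLp_snd]
        rw [sub_self, show T x' - tB i - T x' = -(tB i) by ring]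
        simp
      have hsel : ∀ i : ℕ, ∃ qi, qi ∈ S ∧ ∀ w ∈ S, ‖z i - qi‖ ≤ ‖z i - w‖ := by
        intro i
        obtain ⟨qi, hqi, hmin⟩ := hScompact.exists_isMinOn ⟨Q, hQS⟩
          ((continuous_const.sub continuous_id).norm.continuousOn)
        exact ⟨qi, hqi, fun w hw => hmin hw⟩
      choose qB hqBS hqBmin using hsel
      have hzq : ∀ i, ‖z i - qB i‖ ≤ tB i := by
        intro i
        have := hqBmin i Q hQS
        rwa [hzQ i] at this
      have hqP : ∀ i, ‖qB i - pairLp xbar (T xbar)‖ ≤ R/2 := by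
        intro i
        have h1 : ‖qB i - pairLp xbar (T xbar)‖ ≤ ‖qB i - z i‖ + ‖z i - Q‖ + ‖Q - pairLp xbar (T xbar)‖ := by
          have := norm_sub_le_norm_sub_add_norm_sub (qB i) (z i) (pairLp xbar (T xbar))
          have h2 := norm_sub_le_norm_sub_add_norm_sub (z i) Q (pairLp xbar (T xbar))
          linarith
        rw [norm_sub_rev (qB i) (z i)] at h1
        have h3 := hzq i
        have h4 := hzQ i
        have h5 := hQP x' hx'
        have h6 := htB8 i
        linarith
      have hloc : ∀ i, ∀ w ∈ epigraphOn T Ω, ‖w - qB i‖ ≤ R/4 → w ∈ S := by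
        intro i w hw hwq
        have hwP : ‖w - pairLp xbar (T xbar)‖ ≤ R := by
          have h1 : ‖w - pairLp xbar (T xbar)‖ ≤ ‖w - qB i‖ + ‖qB i - pairLp xbar (T xbar)‖ :=
            norm_sub_le_norm_sub_add_norm_sub _ _ _
          have := hqP i
          linarith
        refine ⟨?_, hw.2, hwP⟩
        rw [Metric.mem_closedBall, dist_eq_norm]
        have h2 : ‖w.fst - xbar‖ ≤ ‖w - pairLp xbar (T xbar)‖ := by
          have := aux_pair_fst_le (w - pairLp xbar (T xbar))
          exact this
        calc ‖w.fst - xbar‖ ≤ R := le_trans h2 hwP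
          _ ≤ 2 * r₁ := by linarith
      have hzK : ∀ i, z i ∉ epigraphOn T Ω := by
        intro i hmem
        have := hmem.2
        rw [hzdef] at this
        have h1 : T x' ≤ T x' - tB i := this
        linarith [htB i]
      set vB : ℕ → WithLp 2 (Euc N × ℝ) := fun i => z i - qB i with hvBdef
      have hvBN : ∀ i, vB i ∈ proxNormalCone (epigraphOn T Ω) (qB i) :=
        fun i => aux_prox_of_min (hqBS i) (hqBmin i) (by positivity : (0:ℝ) < R/4) (hloc i)
      have hvBne : ∀ i, vB i ≠ 0 := by
        intro i h0
        have : z i = qB i := by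
          have := sub_eq_zero.mp h0
          exact this
        exact hzK i (this ▸ hSK (hqBS i))
      have hvBpos : ∀ i, 0 < ‖vB i‖ := fun i => norm_pos_iff.mpr (hvBne i)
      have hvBslope : ∀ i, s * ‖vB i‖ ≤ -(vB i).snd :=
        fun i => hslope (qB i) (hSK (hqBS i)) (le_trans (hqP i) (by linarith)) (vB i) (hvBN i)
      set uB : ℕ → WithLp 2 (Euc N × ℝ) := fun i => ‖vB i‖⁻¹ • vB i with huBdef
      have huBN : ∀ i, uB i ∈ proxNormalCone (epigraphOn T Ω) (qB i) :=
        fun i => aux_prox_smul (inv_nonneg.mpr (hvBpos i).le) (hvBN i)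
      have huBn : ∀ i, ‖uB i‖ = 1 := by
        intro i
        rw [huBdef]
        simp only [norm_smul, norm_inv, norm_norm]
        exact inv_mul_cancel₀ (hvBpos i).ne'
      have huBs : ∀ i, (uB i).snd ≤ -s := by
        intro i
        have h1 := mul_le_mul_of_nonneg_left (hvBslope i) (inv_nonneg.mpr (hvBpos i).le)
        have h2 : ‖vB i‖⁻¹ * (s * ‖vB i‖) = s := by
          rw [mul_comm s, ← mul_assoc, inv_mul_cancel₀ (hvBpos i).ne', one_mul]
        have h3 : (uB i).snd = ‖vB i‖⁻¹ * (vB i).snd := rfl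
        rw [h3]
        nlinarith [h1, h2]
      have hmem : ∀ i, uB i ∈ Metric.sphere (0 : WithLp 2 (Euc N × ℝ)) 1 := by
        intro i; rw [mem_sphere_zero_iff_norm]; exact huBn i
      obtain ⟨a, ha, ψ, hψm, hψt⟩ :=
        (isCompact_sphere (0 : WithLp 2 (Euc N × ℝ)) 1).tendsto_subseq hmem
      have hqQ : Tendsto (fun i => qB (ψ i)) atTop (nhds Q) := by
        rw [tendsto_iff_norm_sub_tendsto_zero]
        have htend : Tendsto (fun i : ℕ => 2 * ((R/8)/(i+1))) atTop (nhds 0) := by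
          have hcm : Tendsto (fun i : ℕ => (2*(R/8)) * (1/(i+1:ℝ))) atTop
              (nhds ((2*(R/8)) * 0)) :=
            tendsto_one_div_add_atTop_nhds_zero_nat.const_mul _
          rw [mul_zero] at hcm
          exact hcm.congr (fun i => by ring)
        refine squeeze_zero (fun i => norm_nonneg _) (fun i => ?_) htend
        have h1 : ‖qB (ψ i) - Q‖ ≤ ‖qB (ψ i) - z (ψ i)‖ + ‖z (ψ i) - Q‖ :=
          norm_sub_le_norm_sub_add_norm_sub _ _ _
        rw [norm_sub_rev (qB (ψ i)) (z (ψ i))] at h1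
        have h2 := hzq (ψ i)
        have h3 := hzQ (ψ i)
        have h4 : tB (ψ i) ≤ tB i := by
          rw [htBdef]
          apply div_le_div_of_nonneg_left (by positivity) (by positivity)
          have hle : i ≤ ψ i := hψm.le_apply
          have : (i:ℝ) ≤ (ψ i : ℝ) := by exact_mod_cast hle
          linarith
        have h5 : tB i = (R/8)/(i+1) := rfl
        rw [h5] at h4
        linarith
      refine ⟨a, ?_, mem_sphere_zero_iff_norm.mp ha, ?_⟩
      · exact aux_prox_limit hφc hφ0 hφN (fun i => hSK (hqBS (ψ i))) (hQK x' hx')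
          (fun i => huBN (ψ i)) hqQ hψt
      · have h2t : Tendsto (fun i => (uB (ψ i)).snd) atTop (nhds a.snd) := aux_pair_tendsto_snd hψt
        exact le_of_tendsto h2t (Eventually.of_forall (fun i => huBs (ψ i)))
    -- the Lipschitz estimate on the small ball
    have hLip : ∀ x' ∈ Metric.ball xbar r₂, ∀ y' ∈ Metric.ball xbar r₂,
        s * (T x' - T y') ≤ (2 + s) * ‖x' - y'‖ := by
      intro x' hx' y' hy'
      clear_value r₂
      clear_value m
      clear_value S
      clear_value R
      clear_value r₁
      clear_value Φ
      rcases le_or_gt (T x' - T y') 0 with hle | hgt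
      · have h0 : 0 ≤ ‖x' - y'‖ := norm_nonneg _
        nlinarith
      · obtain ⟨u, huN, hun, hus⟩ := claimB x' hx'
        set t : ℝ := T x' - T y' with htdef
        set d : ℝ := ‖x' - y'‖ with hddef
        have hd0 : 0 ≤ d := norm_nonneg _
        clear_value t d
        set Q : WithLp 2 (Euc N × ℝ) := pairLp x' (T x') with hQdef
        set w : WithLp 2 (Euc N × ℝ) := pairLp y' (T y') with hwdef
        have hwK : w ∈ epigraphOn T Ω := hQK y' hy'
        -- φ bound at Q
        have hφQ : φ Q ≤ Φ := by
          have h1 : dist Q (pairLp xbar (T xbar)) < ε₂' := by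
            rw [dist_eq_norm]
            have := hQP x' hx'
            have : ‖Q - pairLp xbar (T xbar)‖ ≤ R/4 := this
            linarith [hRε₂, hR]
          have h2 := hφb (hQK x' hx') h1
          rw [Real.dist_eq] at h2
          have h3 := abs_lt.mp h2
          rw [hΦdef]
          linarith [h3.1, h3.2]
        -- positive reach inequality at Q for w
        have hkey : ⟪u, w - Q⟫ ≤ Φ * d^2 + Φ * t^2 := by
          have h1 := hφN Q (hQK x' hx') u huN w hwK
          rw [hun] at h1
          have h2 : ‖w - Q‖^2 = d^2 + t^2 := by
            rw [hwdef, hQdef, aux_pairLp_sub, aux_pair_norm_sq, aux_pairLp_fst, aux_pairLp_snd]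
            rw [hddef, htdef, norm_sub_rev]
            ring
          rw [h2] at h1
          calc ⟪u, w - Q⟫ ≤ φ Q * 1 * (d^2 + t^2) := h1
            _ ≤ Φ * d^2 + Φ * t^2 := by nlinarith [sq_nonneg d, sq_nonneg t]
        set z : WithLp 2 (Euc N × ℝ) := pairLp x' (T y') with hzdef
        have hzw : ‖z - w‖ = d := by
          refine aux_pair_norm_eq hd0 ?_
          rw [hzdef, hwdef, aux_pairLp_sub, aux_pair_norm_sq, aux_pairLp_fst, aux_pairLp_snd]
          simp [hddef]
        have hinzw : ⟪z - w, u⟫ ≤ d := by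
          have h1 := real_inner_le_norm (z - w) u
          rw [hzw, hun, mul_one] at h1
          exact h1
        have hinzQ : ⟪z - Q, u⟫ = -t * u.snd := by
          have h1 : z - Q = pairLp 0 (-t) := by
            rw [hzdef, hQdef, aux_pairLp_sub]
            congr 1
            · simp
            · rw [htdef]; ring
          rw [h1, real_inner_comm, aux_pair_inner, aux_pairLp_fst, aux_pairLp_snd]
          simp
          ring
        have hsplit : ⟪z - w, u⟫ = ⟪z - Q, u⟫ - ⟪w - Q, u⟫ := by
          rw [← inner_sub_left]
          congr 1
          abel
        have hinwQ : ⟪w - Q, u⟫ = ⟪u, w - Q⟫ := real_inner_comm _ _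
        have hmain : s * t - (Φ * d^2 + Φ * t^2) ≤ d := by
          have h1 : s * t ≤ -t * u.snd := by nlinarith [hgt]
          rw [hsplit, hinzQ, hinwQ] at hinzw
          linarith [hkey]
        -- size bounds on t and d
        have htm : t ≤ 2 * m := by
          have h1 := hTball x' hx'
          have h2 := hTball y' hy'
          rw [htdef]
          have := abs_le.mp h1
          have := abs_le.mp h2
          cases' abs_le.mp h1 with h1a h1b
          cases' abs_le.mp h2 with h2a h2b
          linarith
        have htΦ : Φ * t ≤ s/4 := by
          have h' := hms
          rw [le_div_iff₀ (by positivity)] at h'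
          rw [mul_comm, ← le_div_iff₀ hΦ0, div_div]
          rw [le_div_iff₀ (by positivity)]
          nlinarith [htm, h', hΦ0]
        have hdΦ : Φ * d ≤ s/4 := by
          have h1 : d < 2 * r₂ := by
            rw [hddef]
            have h2 := Metric.mem_ball.mp hx'
            have h3 := Metric.mem_ball.mp hy'
            calc ‖x' - y'‖ ≤ ‖x' - xbar‖ + ‖xbar - y'‖ := norm_sub_le_norm_sub_add_norm_sub _ _ _
              _ < 2 * r₂ := by
                  rw [← dist_eq_norm, ← dist_eq_norm, dist_comm xbar y'] at *
                  linarith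
          have h2 : d ≤ 2 * m := le_trans h1.le (by linarith)
          have h' := hms
          rw [le_div_iff₀ (by positivity)] at h'
          rw [mul_comm, ← le_div_iff₀ hΦ0, div_div]
          rw [le_div_iff₀ (by positivity)]
          nlinarith [h2, h', hΦ0]
        -- conclude
        have hfin : s * t ≤ d + (s/4) * d + (s/4) * t := by
          have h1 : Φ * d^2 ≤ (s/4) * d := by nlinarith
          have h2 : Φ * t^2 ≤ (s/4) * t := by nlinarith
          linarith only [hmain, h1, h2]
        nlinarith [hgt, hd0, hs]
    -- derive the contradiction with non-Lipschitzness
    obtain ⟨xs, ys, hne, hxs, hys, hlimsup⟩ := hNL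
    set L : ℝ := (2 + s)/s with hLdef
    have hL0 : 0 ≤ L := by positivity
    have hev : ∀ᶠ i in atTop, (|T (ys i) - T (xs i)| / ‖ys i - xs i‖ : ℝ) ≤ L := by
      have hbx := hxs (Metric.ball_mem_nhds xbar hr₂)
      have hby := hys (Metric.ball_mem_nhds xbar hr₂)
      filter_upwards [hbx, hby] with i hix hiy
      have hnepos : 0 < ‖ys i - xs i‖ :=
        norm_pos_iff.mpr (sub_ne_zero.mpr (Ne.symm (hne i)))
      rw [div_le_iff₀ hnepos]
      have h1 := hLip (ys i) hiy (xs i) hix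
      have h2 := hLip (xs i) hix (ys i) hiy
      rw [norm_sub_rev (xs i) (ys i)] at h2
      have habs : s * |T (ys i) - T (xs i)| ≤ (2 + s) * ‖ys i - xs i‖ := by
        rcases abs_cases (T (ys i) - T (xs i)) with ⟨h3, _⟩ | ⟨h3, _⟩
        · rw [h3]; linarith
        · rw [h3]; linarith
      rw [hLdef]
      rw [div_mul_eq_mul_div, le_div_iff₀ hs]
      nlinarith [habs, norm_nonneg (ys i - xs i)]
    have hls : limsup (fun i => ((|T (ys i) - T (xs i)| / ‖ys i - xs i‖ : ℝ) : EReal)) atTop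
        ≤ (L : EReal) := by
      apply limsup_le_of_le
      · isBoundedDefault
      · exact hev.mono (fun i hi => by exact_mod_cast hi)
    rw [hlimsup] at hls
    simp at hls
  · -- easy direction: a horizontal proximal normal forces non-Lipschitz behaviour
    rintro ⟨ζ, hζ0, σ, hσ0, hσ⟩
    set σ₁ : ℝ := σ + 1 with hσ₁def
    have hσ₁ : 0 < σ₁ := by linarith
    have hζn : 0 < ‖ζ‖ := norm_pos_iff.mpr hζ0
    obtain ⟨δ, hδ, hball⟩ := Metric.isOpen_iff.mp hΩ xbar hx
    set u : Euc N := ‖ζ‖⁻¹ • ζ with hu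
    have hun : ‖u‖ = 1 := norm_smul_inv_norm hζ0
    set t : ℕ → ℝ := fun i => min (δ/2) (‖ζ‖ / (σ₁ * ((i:ℝ)^2 + 1))) with htdef
    have htpos : ∀ i, 0 < t i := fun i => lt_min (by positivity) (by positivity)
    have htle : ∀ i, σ₁ * t i * ((i:ℝ)^2 + 1) ≤ ‖ζ‖ := by
      intro i
      have h1 : t i ≤ ‖ζ‖ / (σ₁ * ((i:ℝ)^2 + 1)) := min_le_right _ _
      rw [le_div_iff₀ (by positivity)] at h1
      nlinarith [h1]
    set ys : ℕ → Euc N := fun i => xbar + (t i) • u with hys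
    have hysn : ∀ i, ‖ys i - xbar‖ = t i := by
      intro i
      rw [hys]
      simp only [add_sub_cancel_left]
      rw [norm_smul, hun, Real.norm_eq_abs, abs_of_pos (htpos i), mul_one]
    have hysΩ : ∀ i, ys i ∈ Ω := by
      intro i
      apply hball
      rw [Metric.mem_ball, dist_eq_norm, hysn i]
      have := min_le_left (δ/2) (‖ζ‖ / (σ₁ * ((i:ℝ)^2 + 1)))
      calc t i ≤ δ/2 := this
        _ < δ := by linarith
    have hyK : ∀ i, pairLp (ys i) (T (ys i)) ∈ epigraphOn T Ω :=
      fun i => ⟨hysΩ i, le_refl _⟩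
    have hinζ : ⟪ζ, u⟫ = ‖ζ‖ := by
      rw [hu, real_inner_smul_right, real_inner_self_eq_norm_mul_norm, ← mul_assoc,
        inv_mul_cancel₀ hζn.ne', one_mul]
    have key : ∀ i, t i * ‖ζ‖ ≤ σ₁ * ((t i)^2 + (T (ys i) - T xbar)^2) := by
      intro i
      have h1 := hσ (pairLp (ys i) (T (ys i))) (hyK i)
      rw [aux_pairLp_sub, aux_pair_inner, aux_pairLp_fst, aux_pairLp_snd,
        aux_pair_norm_sq, aux_pairLp_fst, aux_pairLp_snd] at h1
      simp only [zero_mul, add_zero] at h1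
      have h2 : ys i - xbar = (t i) • u := by rw [hys]; simp
      rw [h2] at h1
      rw [real_inner_smul_right, hinζ] at h1
      have h3 : ‖(t i) • u‖ = t i := by
        rw [norm_smul, hun, Real.norm_eq_abs, abs_of_pos (htpos i), mul_one]
      rw [h3] at h1
      have h4 : σ * (t i ^ 2 + (T (ys i) - T xbar) ^ 2)
          ≤ σ₁ * (t i ^ 2 + (T (ys i) - T xbar) ^ 2) := by
        have : (0:ℝ) ≤ t i ^ 2 + (T (ys i) - T xbar) ^ 2 := by positivity
        nlinarith
      linarith [h1, h4]
    have hratio : ∀ i : ℕ, (i:ℝ) ≤ |T (ys i) - T xbar| / ‖ys i - xbar‖ := by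
      intro i
      have h1 := key i
      have h2 := htle i
      have h3 : σ₁ * (t i)^2 * ((i:ℝ)^2 + 1) ≤ t i * ‖ζ‖ := by
        have := mul_le_mul_of_nonneg_left h2 (htpos i).le
        nlinarith [this]
      have h4 : σ₁ * (t i)^2 * (i:ℝ)^2 ≤ σ₁ * (T (ys i) - T xbar)^2 := by nlinarith
      have h5 : (t i * i)^2 ≤ (T (ys i) - T xbar)^2 := by nlinarith [sq_nonneg (t i * i)]
      have h6 : t i * i ≤ |T (ys i) - T xbar| := by
        refine aux_le_of_sq_le_sq (by positivity) (abs_nonneg _) ?_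
        rw [sq_abs]
        exact h5
      rw [hysn i, le_div_iff₀ (htpos i)]
      linarith [h6]
    have htz : Tendsto t atTop (nhds 0) := by
      have hb : Tendsto (fun i : ℕ => ‖ζ‖ / (σ₁ * ((i:ℝ)^2 + 1))) atTop (nhds 0) := by
        apply Tendsto.div_atTop (tendsto_const_nhds)
        apply Tendsto.const_mul_atTop hσ₁
        apply tendsto_atTop_add_const_right
        exact (tendsto_pow_atTop (two_ne_zero)).comp tendsto_natCast_atTop_atTop
      exact squeeze_zero (fun i => (htpos i).le) (fun i => min_le_right _ _) hb
    have hyst : Tendsto ys atTop (nhds xbar) := by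
      rw [tendsto_iff_norm_sub_tendsto_zero]
      refine squeeze_zero (fun i => norm_nonneg _) (fun i => ?_) htz
      rw [hysn i]
    refine ⟨fun _ => xbar, ys, ?_, tendsto_const_nhds, hyst, ?_⟩
    · intro i h
      have : (t i) • u = 0 := by
        have := h
        rw [hys] at this
        simpa using this.symm
      have hu0 : u ≠ 0 := by
        intro h0
        rw [h0] at hun
        simp at hun
      exact (smul_ne_zero (htpos i).ne' hu0) this
    · have hT : Tendsto (fun i => ((|T (ys i) - T xbar| / ‖ys i - xbar‖ : ℝ) : EReal))
          atTop (nhds ⊤) := by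
        rw [EReal.tendsto_nhds_top_iff_real]
        intro x
        filter_upwards [eventually_gt_atTop (Nat.ceil (max 0 x))] with i hi
        have h1 : (x:ℝ) < i :=
          lt_of_le_of_lt (le_max_right 0 x) (by exact_mod_cast Nat.lt_of_ceil_lt hi)
        have h2 := hratio i
        exact_mod_cast lt_of_lt_of_le h1 h2
      exact hT.limsup_eq
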